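/- Let D and D' be product distributions on ℝⁿ with coordinate-wise Kolmogorov distances d_k(D_i, D'_i) ≤ α_i. Then for every coordinate-wise increasing function u : ℝⁿ → [0, ū], |E_{v~D}[u(v)] - E_{v~D'}[u(v)]| ≤ ū · Σᵢ αᵢ. -/

import Mathlib

open MeasureTheory Set Filter

/-- A bounded measurable function is integrable w.r.t. a finite measure. -/
lemma kifb_integrable_of_bdd {X : Type*} [MeasurableSpace X] (μ : Measure X) [IsFiniteMeasure μ]
    {f : X → ℝ} {C : ℝ} (hm : AEStronglyMeasurable f μ) (h0 : ∀ x, 0 ≤ f x) (h1 : ∀ x, f x ≤ C) :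
    Integrable f μ :=
  Integrable.mono' (integrable_const C) hm
    (Filter.Eventually.of_forall fun x => by
      rw [Real.norm_eq_abs, abs_of_nonneg (h0 x)]; exact h1 x)

lemma kifb_integral_le {X : Type*} [MeasurableSpace X] (μ : Measure X) [IsProbabilityMeasure μ]
    {f : X → ℝ} {C : ℝ} (hi : Integrable f μ) (h : ∀ x, f x ≤ C) : ∫ x, f x ∂μ ≤ C := by
  calc ∫ x, f x ∂μ ≤ ∫ _, C ∂μ := integral_mono hi (integrable_const C) h
  _ = C := by simp

/-- Kolmogorov bound passes from `Iio` to `Iic` by continuity of measures. -/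
lemma kifb_iic_bound (μ ν : Measure ℝ) [IsProbabilityMeasure μ] [IsProbabilityMeasure ν]
    {α : ℝ} (hks : ∀ x, |(μ (Iio x)).toReal - (ν (Iio x)).toReal| ≤ α) (c : ℝ) :
    |(μ (Iic c)).toReal - (ν (Iic c)).toReal| ≤ α := by
  have hInter : ⋂ k : ℕ, Iio (c + 1/(k+1)) = Iic c := by
    ext y
    simp only [mem_iInter, mem_Iio, mem_Iic]
    constructor
    · intro h
      by_contra hy
      push_neg at hy
      obtain ⟨k, hk⟩ := exists_nat_one_div_lt (sub_pos.2 hy)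
      exact absurd (h k) (not_lt.2 (by linarith))
    · intro h k
      have : 0 < 1/((k:ℝ)+1) := by positivity
      linarith
  have key : ∀ (m : Measure ℝ), IsProbabilityMeasure m →
      Tendsto (fun k : ℕ => (m (Iio (c + 1/(k+1)))).toReal) atTop
        (nhds ((m (Iic c)).toReal)) := by
    intro m hm
    have h1 : Tendsto (fun k : ℕ => m (Iio (c + 1/(k+1)))) atTop (nhds (m (Iic c))) := by
      rw [← hInter]
      apply tendsto_measure_iInter_atTop
        (fun k => (measurableSet_Iio).nullMeasurableSet) ?_ ⟨0, measure_ne_top m _⟩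
      intro a b hab
      apply Iio_subset_Iio
      have hab' : (a:ℝ) ≤ b := Nat.cast_le.mpr hab
      have : 1/((b:ℝ)+1) ≤ 1/((a:ℝ)+1) := by
        apply one_div_le_one_div_of_le (by positivity)
        linarith
      linarith
    exact (ENNReal.tendsto_toReal (measure_ne_top m _)).comp h1
  have hten := ((key μ ‹_›).sub (key ν ‹_›)).abs
  exact le_of_tendsto hten (Filter.Eventually.of_forall fun k => hks _)

/-- Classification of upper sets in ℝ. -/
lemma kifb_upperSet_cases {S : Set ℝ} (hS : IsUpperSet S) :
    S = ∅ ∨ S = univ ∨ (∃ c, S = Ioi c) ∨ ∃ c, S = Ici c := by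
  rcases eq_empty_or_nonempty S with h | h
  · exact Or.inl h
  by_cases hu : S = univ
  · exact Or.inr (Or.inl hu)
  obtain ⟨x, hx⟩ : ∃ x, x ∉ S := by
    by_contra hc
    push_neg at hc
    exact hu (eq_univ_of_forall hc)
  have hbdd : BddBelow S := ⟨x, fun y hy => le_of_not_gt fun h' => hx (hS h'.le hy)⟩
  set c := sInf S with hc
  have hsub : Ioi c ⊆ S := fun y hy => by
    obtain ⟨s, hsS, hsy⟩ := (csInf_lt_iff hbdd h).mp hy
    exact hS hsy.le hsS
  have hsup : S ⊆ Ici c := fun y hy => csInf_le hbdd hy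
  by_cases hcS : c ∈ S
  · refine Or.inr (Or.inr (Or.inr ⟨c, subset_antisymm hsup fun y hy => hS hy hcS⟩))
  · refine Or.inr (Or.inr (Or.inl ⟨c, subset_antisymm ?_ hsub⟩))
    intro y hy
    exact lt_of_le_of_ne (mem_Ici.mp (hsup hy)) fun hEq => hcS (hEq ▸ hy)

/-- Upper sets have measures within the Kolmogorov distance. -/
lemma kifb_upperSet_bound (μ ν : Measure ℝ) [IsProbabilityMeasure μ] [IsProbabilityMeasure ν]
    {α : ℝ} (hks : ∀ x, |(μ (Iio x)).toReal - (ν (Iio x)).toReal| ≤ α)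
    {S : Set ℝ} (hS : IsUpperSet S) :
    |(μ S).toReal - (ν S).toReal| ≤ α := by
  have hα : 0 ≤ α := le_trans (abs_nonneg _) (hks 0)
  have hcompl : ∀ (m : Measure ℝ), IsProbabilityMeasure m → ∀ (T : Set ℝ), MeasurableSet T →
      (m Tᶜ).toReal = 1 - (m T).toReal := by
    intro m hm T hT
    rw [prob_compl_eq_one_sub hT, ENNReal.toReal_sub_of_le prob_le_one ENNReal.one_ne_top,
      ENNReal.toReal_one]
  rcases kifb_upperSet_cases hS with h | h | ⟨c, h⟩ | ⟨c, h⟩ <;> subst h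
  · simpa using hα
  · simpa using hα
  · have h1 : (μ (Ioi c)).toReal = 1 - (μ (Iic c)).toReal := by
      rw [← Set.compl_Iic]; exact hcompl μ ‹_› _ measurableSet_Iic
    have h2 : (ν (Ioi c)).toReal = 1 - (ν (Iic c)).toReal := by
      rw [← Set.compl_Iic]; exact hcompl ν ‹_› _ measurableSet_Iic
    rw [h1, h2]
    have := kifb_iic_bound μ ν hks c
    rw [abs_sub_comm] at this
    calc |1 - (μ (Iic c)).toReal - (1 - (ν (Iic c)).toReal)|
        = |(ν (Iic c)).toReal - (μ (Iic c)).toReal| := by ring_nf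
      _ ≤ α := this
  · have h1 : (μ (Ici c)).toReal = 1 - (μ (Iio c)).toReal := by
      rw [← Set.compl_Iio]; exact hcompl μ ‹_› _ measurableSet_Iio
    have h2 : (ν (Ici c)).toReal = 1 - (ν (Iio c)).toReal := by
      rw [← Set.compl_Iio]; exact hcompl ν ‹_› _ measurableSet_Iio
    rw [h1, h2]
    have := hks c
    rw [abs_sub_comm] at this
    calc |1 - (μ (Iio c)).toReal - (1 - (ν (Iio c)).toReal)|
        = |(ν (Iio c)).toReal - (μ (Iio c)).toReal| := by ring_nf
      _ ≤ α := this

/-- The one-dimensional case, via the layer-cake representation. -/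
lemma kifb_one_dim (μ ν : Measure ℝ) [IsProbabilityMeasure μ] [IsProbabilityMeasure ν]
    {α : ℝ} (hks : ∀ x, |(μ (Iio x)).toReal - (ν (Iio x)).toReal| ≤ α)
    {f : ℝ → ℝ} (hf : Monotone f) {C : ℝ} (h0 : ∀ x, 0 ≤ f x) (h1 : ∀ x, f x ≤ C) :
    |∫ x, f x ∂μ - ∫ x, f x ∂ν| ≤ C * α := by
  have hC : (0:ℝ) ≤ C := le_trans (h0 0) (h1 0)
  have hα : 0 ≤ α := le_trans (abs_nonneg _) (hks 0)
  have hfm : Measurable f := hf.measurable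
  have hiμ : Integrable f μ := kifb_integrable_of_bdd μ hfm.aestronglyMeasurable h0 h1
  have hiν : Integrable f ν := kifb_integrable_of_bdd ν hfm.aestronglyMeasurable h0 h1
  rw [hiμ.integral_eq_integral_meas_lt (Filter.Eventually.of_forall h0),
    hiν.integral_eq_integral_meas_lt (Filter.Eventually.of_forall h0)]
  set gμ : ℝ → ℝ := fun t => (μ {a | t < f a}).toReal with hgμ
  set gν : ℝ → ℝ := fun t => (ν {a | t < f a}).toReal with hgν
  have hmeasg : ∀ (m : Measure ℝ), Measurable (fun t => (m {a | t < f a}).toReal) := by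
    intro m
    apply ENNReal.measurable_toReal.comp
    apply Antitone.measurable
    intro s t hst
    exact measure_mono fun a ha => lt_of_le_of_lt hst ha
  -- the upper-set bound, valid for every t
  have hupper : ∀ t : ℝ, |gμ t - gν t| ≤ α := by
    intro t
    apply kifb_upperSet_bound μ ν hks
    intro a b hab ha
    exact lt_of_lt_of_le ha (hf hab)
  have hzero : ∀ t : ℝ, C ≤ t → gμ t = 0 ∧ gν t = 0 := by
    intro t ht
    have : {a | t < f a} = ∅ := by
      ext a; simp only [mem_setOf_eq, mem_empty_iff_false, iff_false, not_lt]
      exact le_trans (h1 a) ht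
    constructor <;> simp [hgμ, hgν, this]
  -- the constant bound function
  set B : ℝ → ℝ := (Ioc (0:ℝ) C).indicator (fun _ => α) with hB
  have hBint : Integrable B (volume.restrict (Ioi (0:ℝ))) := by
    rw [hB, integrable_indicator_iff measurableSet_Ioc]
    refine integrableOn_const (ne_of_lt ?_) (by simp)
    calc (volume.restrict (Ioi (0:ℝ))) (Ioc 0 C) ≤ volume (Ioc (0:ℝ) C) :=
          Measure.restrict_le_self _
      _ < ⊤ := by rw [Real.volume_Ioc]; exact ENNReal.ofReal_lt_top
  have hbdd1 : ∀ᵐ t ∂(volume.restrict (Ioi (0:ℝ))), ∀ (m : Measure ℝ),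
      IsProbabilityMeasure m → ‖(m {a | t < f a}).toReal‖ ≤ (Ioc (0:ℝ) C).indicator (fun _ => (1:ℝ)) t := by
    filter_upwards [self_mem_ae_restrict measurableSet_Ioi] with t ht m hm
    rw [Real.norm_eq_abs, abs_of_nonneg ENNReal.toReal_nonneg]
    by_cases htC : t ≤ C
    · rw [indicator_of_mem (Set.mem_Ioc.mpr ⟨ht, htC⟩)]
      calc (m {a | t < f a}).toReal ≤ (m univ).toReal := by
            apply ENNReal.toReal_mono (measure_ne_top m _) (measure_mono (subset_univ _))
        _ = 1 := by simp
    · push_neg at htC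
      have : {a | t < f a} = ∅ := by
        ext a; simp only [mem_setOf_eq, mem_empty_iff_false, iff_false, not_lt]
        exact le_trans (h1 a) htC.le
      rw [this]
      simp only [measure_empty, ENNReal.toReal_zero]
      exact indicator_nonneg (fun _ _ => zero_le_one) t
  have hInd : Integrable ((Ioc (0:ℝ) C).indicator (fun _ => (1:ℝ)))
      (volume.restrict (Ioi (0:ℝ))) := by
    rw [integrable_indicator_iff measurableSet_Ioc]
    refine integrableOn_const (ne_of_lt ?_) (by simp)
    calc (volume.restrict (Ioi (0:ℝ))) (Ioc 0 C) ≤ volume (Ioc (0:ℝ) C) :=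
          Measure.restrict_le_self _
      _ < ⊤ := by rw [Real.volume_Ioc]; exact ENNReal.ofReal_lt_top
  have hgμint : Integrable gμ (volume.restrict (Ioi (0:ℝ))) := by
    apply Integrable.mono' hInd ((hmeasg μ).aestronglyMeasurable)
    filter_upwards [hbdd1] with t ht using ht μ ‹_›
  have hgνint : Integrable gν (volume.restrict (Ioi (0:ℝ))) := by
    apply Integrable.mono' hInd ((hmeasg ν).aestronglyMeasurable)
    filter_upwards [hbdd1] with t ht using ht ν ‹_›
  show |(∫ t in Ioi (0:ℝ), gμ t) - ∫ t in Ioi (0:ℝ), gν t| ≤ C * α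
  rw [← integral_sub hgμint hgνint]
  have hBval : ∫ t in Ioi (0:ℝ), B t = α * C := by
    rw [hB, integral_indicator measurableSet_Ioc, Measure.restrict_restrict measurableSet_Ioc,
      Set.Ioc_inter_Ioi, sup_of_le_left le_rfl]
    rw [setIntegral_const, measureReal_def, Real.volume_Ioc, ENNReal.toReal_ofReal (by linarith), smul_eq_mul]
    ring
  have := norm_integral_le_of_norm_le hBint (μ := volume.restrict (Ioi (0:ℝ)))
    (f := fun t => gμ t - gν t) ?_
  · rw [Real.norm_eq_abs] at this
    calc |∫ t in Ioi (0:ℝ), (gμ t - gν t)| ≤ ∫ t in Ioi (0:ℝ), B t := this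
      _ = α * C := hBval
      _ = C * α := mul_comm _ _
  · filter_upwards [self_mem_ae_restrict measurableSet_Ioi] with t ht
    rw [Real.norm_eq_abs]
    by_cases htC : t ≤ C
    · rw [hB, indicator_of_mem (Set.mem_Ioc.mpr ⟨ht, htC⟩)]
      exact hupper t
    · push_neg at htC
      obtain ⟨e1, e2⟩ := hzero t htC.le
      rw [hB, indicator_of_notMem (by simp [htC.not_ge]), e1, e2]
      simp

theorem kolmogorov_increasing_function_bound_aux :
    ∀ (n : ℕ) (μ ν : Fin n → Measure ℝ)
    (_ : ∀ i, IsProbabilityMeasure (μ i)) (_ : ∀ i, IsProbabilityMeasure (ν i))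
    (α : Fin n → ℝ)
    (_ : ∀ i : Fin n, ∀ x : ℝ,
      |((μ i) (Set.Iio x)).toReal - ((ν i) (Set.Iio x)).toReal| ≤ α i)
    (u : (Fin n → ℝ) → ℝ) (ubar : ℝ)
    (_ : Measurable u)
    (_ : ∀ v, 0 ≤ u v ∧ u v ≤ ubar)
    (_ : ∀ v w : Fin n → ℝ, (∀ i, v i ≤ w i) → u v ≤ u w),
    |(∫ v, u v ∂(Measure.pi μ)) - (∫ v, u v ∂(Measure.pi ν))| ≤
      ubar * ∑ i, α i := by
  intro n
  induction n with
  | zero =>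
    intro μ ν hμ hν α hks u ubar hmeas hbound hinc
    haveI := hμ; haveI := hν
    rw [Measure.pi_of_empty μ, Measure.pi_of_empty ν,
      integral_dirac' u _ hmeas.stronglyMeasurable]
    simp
  | succ n ih =>
    intro μ ν hμ hν α hks u ubar hmeas hbound hinc
    haveI := hμ; haveI := hν
    have hubar : 0 ≤ ubar := le_trans (hbound 0).1 (hbound 0).2
    set e := MeasurableEquiv.piFinSuccAbove (fun _ : Fin (n+1) => ℝ) 0 with he
    set μt : Fin n → Measure ℝ := fun j => μ ((0 : Fin (n+1)).succAbove j) with hμt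
    set νt : Fin n → Measure ℝ := fun j => ν ((0 : Fin (n+1)).succAbove j) with hνt
    haveI : ∀ j, IsProbabilityMeasure (μt j) := fun j => hμ _
    haveI : ∀ j, IsProbabilityMeasure (νt j) := fun j => hν _
    have hmpμ := measurePreserving_piFinSuccAbove μ 0
    have hmpν := measurePreserving_piFinSuccAbove ν 0
    -- description of e.symm
    have hcons : ∀ (x : ℝ) (y : Fin n → ℝ), e.symm (x, y) = Fin.cons x y := by
      intro x y
      simp only [he, MeasurableEquiv.piFinSuccAbove_symm_apply]
      exact Fin.insertNth_zero' x y
    have hconsm : ∀ x : ℝ, Measurable (fun y : Fin n → ℝ => u (e.symm (x, y))) :=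
      fun x => hmeas.comp (e.symm.measurable.comp measurable_prodMk_left)
    have hconsmono : ∀ (x x' : ℝ) (y y' : Fin n → ℝ), x ≤ x' → (∀ j, y j ≤ y' j) →
        u (e.symm (x, y)) ≤ u (e.symm (x', y')) := by
      intro x x' y y' hx hy
      rw [hcons, hcons]
      apply hinc
      intro j
      refine Fin.cases ?_ (fun k => ?_) j <;> simp [hx, hy _]
    -- the two inner integrals
    set F : ℝ → ℝ := fun x => ∫ y, u (e.symm (x, y)) ∂(Measure.pi μt) with hF
    set G : ℝ → ℝ := fun x => ∫ y, u (e.symm (x, y)) ∂(Measure.pi νt) with hG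
    have hFint : ∀ x, Integrable (fun y => u (e.symm (x, y))) (Measure.pi μt) :=
      fun x => kifb_integrable_of_bdd _ (hconsm x).aestronglyMeasurable
        (fun y => (hbound _).1) (fun y => (hbound _).2)
    have hGint : ∀ x, Integrable (fun y => u (e.symm (x, y))) (Measure.pi νt) :=
      fun x => kifb_integrable_of_bdd _ (hconsm x).aestronglyMeasurable
        (fun y => (hbound _).1) (fun y => (hbound _).2)
    have hFmono : Monotone F := by
      intro x x' hx
      exact integral_mono (hFint x) (hFint x') fun y => hconsmono x x' y y hx fun j => le_rfl
    have hGmono : Monotone G := by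
      intro x x' hx
      exact integral_mono (hGint x) (hGint x') fun y => hconsmono x x' y y hx fun j => le_rfl
    have hF0 : ∀ x, 0 ≤ F x := fun x => integral_nonneg fun y => (hbound _).1
    have hF1 : ∀ x, F x ≤ ubar := fun x => kifb_integral_le _ (hFint x) fun y => (hbound _).2
    have hG0 : ∀ x, 0 ≤ G x := fun x => integral_nonneg fun y => (hbound _).1
    have hG1 : ∀ x, G x ≤ ubar := fun x => kifb_integral_le _ (hGint x) fun y => (hbound _).2
    -- Fubini decompositions
    have hue : Integrable (fun p : ℝ × (Fin n → ℝ) => u (e.symm p))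
        ((μ 0).prod (Measure.pi μt)) :=
      kifb_integrable_of_bdd _ ((hmeas.comp e.symm.measurable).aestronglyMeasurable)
        (fun p => (hbound _).1) (fun p => (hbound _).2)
    have hue' : Integrable (fun p : ℝ × (Fin n → ℝ) => u (e.symm p))
        ((ν 0).prod (Measure.pi νt)) :=
      kifb_integrable_of_bdd _ ((hmeas.comp e.symm.measurable).aestronglyMeasurable)
        (fun p => (hbound _).1) (fun p => (hbound _).2)
    have hAeq : ∫ v, u v ∂(Measure.pi μ) = ∫ x, F x ∂(μ 0) := by
      rw [← (hmpμ.symm e).integral_comp e.symm.measurableEmbedding u]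
      exact integral_prod _ hue
    have hCeq : ∫ v, u v ∂(Measure.pi ν) = ∫ x, G x ∂(ν 0) := by
      rw [← (hmpν.symm e).integral_comp e.symm.measurableEmbedding u]
      exact integral_prod _ hue'
    -- hybrid term
    have hFintμ0 : Integrable F (μ 0) :=
      kifb_integrable_of_bdd _ hFmono.measurable.aestronglyMeasurable hF0 hF1
    have hFintν0 : Integrable F (ν 0) :=
      kifb_integrable_of_bdd _ hFmono.measurable.aestronglyMeasurable hF0 hF1
    have hGintν0 : Integrable G (ν 0) :=
      kifb_integrable_of_bdd _ hGmono.measurable.aestronglyMeasurable hG0 hG1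
    -- step 1
    have hstep1 : |∫ x, F x ∂(μ 0) - ∫ x, F x ∂(ν 0)| ≤ ubar * α 0 :=
      kifb_one_dim (μ 0) (ν 0) (hks 0) hFmono hF0 hF1
    -- step 2 : pointwise by induction hypothesis
    have hpt : ∀ x, |F x - G x| ≤ ubar * ∑ j, α ((0 : Fin (n+1)).succAbove j) := by
      intro x
      exact ih μt νt (fun j => hμ _) (fun j => hν _) (fun j => α ((0 : Fin (n+1)).succAbove j))
        (fun j y => hks _ y) (fun y => u (e.symm (x, y))) ubar (hconsm x)
        (fun y => hbound _) (fun y y' hy => hconsmono x x y y' le_rfl hy)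
    have hstep2 : |∫ x, F x ∂(ν 0) - ∫ x, G x ∂(ν 0)| ≤
        ubar * ∑ j, α ((0 : Fin (n+1)).succAbove j) := by
      rw [← integral_sub hFintν0 hGintν0]
      have := norm_integral_le_of_norm_le
        (integrable_const (ubar * ∑ j, α ((0 : Fin (n+1)).succAbove j))) (μ := ν 0)
        (f := fun x => F x - G x) (Filter.Eventually.of_forall fun x => by
          rw [Real.norm_eq_abs]; exact hpt x)
      rw [Real.norm_eq_abs] at this
      simpa using this
    -- combine
    have hsum : ∑ i, α i = α 0 + ∑ j, α ((0 : Fin (n+1)).succAbove j) := by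
      simp only [Fin.zero_succAbove]
      exact Fin.sum_univ_succ α
    rw [hAeq, hCeq, hsum, mul_add]
    calc |∫ x, F x ∂(μ 0) - ∫ x, G x ∂(ν 0)|
        ≤ |∫ x, F x ∂(μ 0) - ∫ x, F x ∂(ν 0)| + |∫ x, F x ∂(ν 0) - ∫ x, G x ∂(ν 0)| := abs_sub_le _ _ _
      _ ≤ ubar * α 0 + ubar * ∑ j, α ((0 : Fin (n+1)).succAbove j) :=
          add_le_add hstep1 hstep2

/-- For product distributions D, D' on ℝⁿ with coordinate-wise
Kolmogorov distances d_k(D_i, D'_i) ≤ α_i, and every coordinate-wise increasing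
measurable function u : ℝⁿ → [0, ū], the expectations differ by at most ū·Σᵢ αᵢ. -/
theorem kolmogorov_increasing_function_bound
    (n : ℕ) (μ ν : Fin n → Measure ℝ)
    [∀ i, IsProbabilityMeasure (μ i)] [∀ i, IsProbabilityMeasure (ν i)]
    (α : Fin n → ℝ)
    (hks : ∀ i : Fin n, ∀ x : ℝ,
      |((μ i) (Set.Iio x)).toReal - ((ν i) (Set.Iio x)).toReal| ≤ α i)
    (u : (Fin n → ℝ) → ℝ) (ubar : ℝ)
    (hmeas : Measurable u)
    (hbound : ∀ v, 0 ≤ u v ∧ u v ≤ ubar)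
    (hinc : ∀ v w : Fin n → ℝ, (∀ i, v i ≤ w i) → u v ≤ u w) :
    |(∫ v, u v ∂(Measure.pi μ)) - (∫ v, u v ∂(Measure.pi ν))| ≤
      ubar * ∑ i, α i :=
  kolmogorov_increasing_function_bound_aux n μ ν ‹_› ‹_› α hks u ubar hmeas hbound hinc
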